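/- For every positive integer $n$, $\sum_{k=1}^{n} [2k][k]^{2} q^{2(n-k)} \binom{2n}{n+k}_q = [n]^2 \binom{2n}{n}_q$ as polynomials in $q$. -/
import Mathlib


open Polynomial Finset

/-- The `q`-integer `[n] = 1 + q + ⋯ + q^(n-1)` as a polynomial in `ℤ[q]`. -/
noncomputable def qint (n : ℕ) : Polynomial ℤ := ∑ i ∈ Finset.range n, Polynomial.X ^ i

/-- The Gaussian binomial coefficient `[n choose k]_q` in `ℤ[q]`, via the `q`-Pascal rule. -/
noncomputable def qbinom : ℕ → ℕ → Polynomial ℤ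
  | _, 0 => 1
  | 0, _ + 1 => 0
  | n + 1, k + 1 => qbinom n k + Polynomial.X ^ (k + 1) * qbinom n (k + 1)

lemma qint_zero : qint 0 = 0 := by simp [qint]

lemma qint_one : qint 1 = 1 := by simp [qint]

lemma qint_key (a : ℕ) : ((X : Polynomial ℤ) - 1) * qint a = X ^ a - 1 := by
  rw [qint, mul_comm, geom_sum_mul]

lemma qint_add (a b : ℕ) : qint (a + b) = qint a + X ^ a * qint b := by
  simp [qint, Finset.sum_range_add, pow_add, Finset.mul_sum]

lemma qint_eval_one (k : ℕ) : (qint k).eval 1 = k := by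
  simp [qint, Polynomial.eval_finset_sum]

lemma qint_ne_zero (k : ℕ) (hk : 0 < k) : qint k ≠ 0 := by
  intro h
  have h2 := congrArg (Polynomial.eval 1) h
  rw [qint_eval_one] at h2
  simp at h2
  omega

lemma qbinom_zero_right (n : ℕ) : qbinom n 0 = 1 := by cases n <;> rfl

lemma qbinom_eq_zero : ∀ n k : ℕ, n < k → qbinom n k = 0 := by
  intro n
  induction n with
  | zero => intro k hk; match k, hk with | (k+1), _ => rfl
  | succ n ih =>
    intro k hk
    match k, hk with
    | (k+1), hk =>
      show qbinom n k + X ^ (k+1) * qbinom n (k+1) = 0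
      rw [ih k (by omega), ih (k+1) (by omega)]
      ring

lemma qbinom_self : ∀ n : ℕ, qbinom n n = 1 := by
  intro n
  induction n with
  | zero => rfl
  | succ n ih =>
    show qbinom n n + X ^ (n+1) * qbinom n (n+1) = 1
    rw [ih, qbinom_eq_zero n (n+1) (by omega)]
    ring

lemma qbinom_one : ∀ n : ℕ, qbinom n 1 = qint n := by
  intro n
  induction n with
  | zero => rw [qint_zero]; rfl
  | succ n ih =>
    show qbinom n 0 + X ^ 1 * qbinom n 1 = qint (n+1)
    rw [qbinom_zero_right, ih, show n + 1 = 1 + n by omega, qint_add, qint_one]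

lemma qbinom_ratio : ∀ N k : ℕ, 1 ≤ k →
    qint k * qbinom N k = qint (N + 1 - k) * qbinom N (k - 1) := by
  intro N
  induction N with
  | zero =>
    intro k hk
    match k, hk with
    | (k+1), _ =>
      rw [show qbinom 0 (k+1) = 0 from rfl, show 0 + 1 - (k+1) = 0 by omega, qint_zero]
      ring
  | succ N ih =>
    intro k hk
    match k, hk with
    | 1, _ =>
      rw [qbinom_one, qint_one, qbinom_zero_right, show N + 1 + 1 - 1 = N + 1 by omega]
      ring
    | (k+2), _ =>
      show qint (k+2) * (qbinom N (k+1) + X ^ (k+2) * qbinom N (k+2))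
          = qint (N + 2 - (k+2)) * qbinom (N+1) (k+1)
      have ih1 := ih (k+2) (by omega)
      have ih2 := ih (k+1) (by omega)
      rw [show (k+2) - 1 = k + 1 by omega] at ih1
      rw [show (k+1) - 1 = k by omega] at ih2
      show _ = qint (N + 2 - (k+2)) * (qbinom N k + X ^ (k+1) * qbinom N (k+1))
      rw [show N + 2 - (k + 2) = N - k by omega]
      rw [show N + 1 - (k + 2) = N - k - 1 by omega] at ih1
      rw [show N + 1 - (k + 1) = N - k by omega] at ih2
      by_cases hkN : k + 1 ≤ N
      · have e1 : qint (k+2) + X ^ (k+2) * qint (N - k - 1) = qint (N + 1) := by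
          rw [← qint_add, show k + 2 + (N - k - 1) = N + 1 by omega]
        have e2 : qint (k+1) + X ^ (k+1) * qint (N - k) = qint (N + 1) := by
          rw [← qint_add, show k + 1 + (N - k) = N + 1 by omega]
        calc qint (k+2) * (qbinom N (k+1) + X ^ (k+2) * qbinom N (k+2))
            = qint (k+2) * qbinom N (k+1) + X ^ (k+2) * (qint (k+2) * qbinom N (k+2)) := by
              ring
          _ = (qint (k+2) + X ^ (k+2) * qint (N - k - 1)) * qbinom N (k+1) := by
              rw [ih1]; ring
          _ = (qint (k+1) + X ^ (k+1) * qint (N - k)) * qbinom N (k+1) := by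
              rw [e1, e2]
          _ = qint (N - k) * (qbinom N k + X ^ (k+1) * qbinom N (k+1)) := by
              linear_combination ih2
      · have z1 : qbinom N (k+1) = 0 := qbinom_eq_zero N (k+1) (by omega)
        have z2 : qbinom N (k+2) = 0 := qbinom_eq_zero N (k+2) (by omega)
        have z3 : qint (N - k) = 0 := by rw [show N - k = 0 by omega, qint_zero]
        rw [z1, z2, z3]
        ring

/-- The scalar `q`-integer identity driving the telescoping. -/
lemma scalar_id (i j : ℕ) :
    (qint (i+j+2) ^ 2 + X ^ (j+2) * qint (i+1) ^ 2 * qint j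
        + qint (2*(i+1)) * qint (i+1) ^ 2 * X ^ (2*(j+1))) * qint (j+2)
    = (qint (i+j+2) ^ 2 + X ^ (j+3) * qint i ^ 2 * qint (j+1)) * qint (2*i+j+3) := by
  have hX : ((X : Polynomial ℤ) - 1) ≠ 0 := by
    intro h
    have h2 := congrArg (Polynomial.eval 0) h
    simp at h2
  apply mul_left_cancel₀ (pow_ne_zero 4 hX)
  calc ((X : Polynomial ℤ) - 1) ^ 4 * ((qint (i+j+2) ^ 2 + X ^ (j+2) * qint (i+1) ^ 2 * qint j
        + qint (2*(i+1)) * qint (i+1) ^ 2 * X ^ (2*(j+1))) * qint (j+2))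
      = ((X - 1) * qint (i+j+2)) ^ 2 * ((X - 1) * qint (j+2)) * (X - 1)
        + X ^ (j+2) * ((X - 1) * qint (i+1)) ^ 2 * ((X - 1) * qint j) * ((X - 1) * qint (j+2))
        + ((X - 1) * qint (2*(i+1))) * ((X - 1) * qint (i+1)) ^ 2 * X ^ (2*(j+1))
          * ((X - 1) * qint (j+2)) := by ring
    _ = (X ^ (i+j+2) - 1) ^ 2 * (X ^ (j+2) - 1) * (X - 1)
        + X ^ (j+2) * (X ^ (i+1) - 1) ^ 2 * (X ^ j - 1) * (X ^ (j+2) - 1)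
        + (X ^ (2*(i+1)) - 1) * (X ^ (i+1) - 1) ^ 2 * X ^ (2*(j+1)) * (X ^ (j+2) - 1) := by
          simp only [qint_key]
    _ = (X ^ (i+j+2) - 1) ^ 2 * (X ^ (2*i+j+3) - 1) * (X - 1)
        + X ^ (j+3) * (X ^ i - 1) ^ 2 * (X ^ (j+1) - 1) * (X ^ (2*i+j+3) - 1) := by ring
    _ = ((X - 1) * qint (i+j+2)) ^ 2 * ((X - 1) * qint (2*i+j+3)) * (X - 1)
        + X ^ (j+3) * ((X - 1) * qint i) ^ 2 * ((X - 1) * qint (j+1))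
          * ((X - 1) * qint (2*i+j+3)) := by simp only [qint_key]
    _ = ((X : Polynomial ℤ) - 1) ^ 4
        * ((qint (i+j+2) ^ 2 + X ^ (j+3) * qint i ^ 2 * qint (j+1)) * qint (2*i+j+3)) := by ring

lemma tail_sum (n : ℕ) : ∀ j m : ℕ, 1 ≤ m → m + j = n →
    ∑ k ∈ Finset.Icc m n,
        qint (2 * k) * (qint k) ^ 2 * X ^ (2 * (n - k)) * qbinom (2 * n) (n + k)
      = (qint n ^ 2 + X ^ (n - m + 2) * qint (m - 1) ^ 2 * qint (n - m))
          * qbinom (2 * n) (n + m - 1) := by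
  intro j
  induction j with
  | zero =>
    intro m hm hmn
    have hmn' : m = n := by omega
    subst hmn'
    have hr := qbinom_ratio (2 * m) (2 * m) (by omega)
    rw [show 2 * m + 1 - 2 * m = 1 by omega, qint_one, one_mul, qbinom_self] at hr
    rw [Finset.Icc_self, Finset.sum_singleton, show m - m = 0 by omega, qint_zero,
      show m + m = 2 * m by omega, qbinom_self, ← hr]
    ring
  | succ j ih =>
    intro m hm hmn
    obtain ⟨i, rfl⟩ : ∃ i, m = i + 1 := ⟨m - 1, by omega⟩
    have hsplit : Finset.Icc (i + 1) n = insert (i + 1) (Finset.Icc (i + 2) n) := by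
      ext x; simp; omega
    rw [hsplit, Finset.sum_insert (by simp)]
    rw [ih (i + 2) (by omega) (by omega)]
    -- now a two-term identity
    have hratio := qbinom_ratio (2 * n) (n + (i + 1)) (by omega)
    rw [show 2 * n + 1 - (n + (i + 1)) = j + 2 by omega,
        show n + (i + 1) - 1 = n + i by omega] at hratio
    have hsc := scalar_id i j
    rw [show i + j + 2 = n by omega, show 2 * i + j + 3 = n + (i + 1) by omega] at hsc
    rw [show n - (i + 2) + 2 = j + 2 by omega, show i + 2 - 1 = i + 1 by omega,
        show n - (i + 2) = j by omega, show n + (i + 2) - 1 = n + (i + 1) by omega,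
        show 2 * (n - (i + 1)) = 2 * (j + 1) by omega,
        show n + (i + 1) - 1 = n + i by omega,
        show n - (i + 1) + 2 = j + 3 by omega, show i + 1 - 1 = i by omega,
        show n - (i + 1) = j + 1 by omega]
    have hnz : qint (j + 2) ≠ 0 := qint_ne_zero _ (by omega)
    apply mul_left_cancel₀ hnz
    linear_combination qbinom (2 * n) (n + (i + 1)) * hsc
      + (qint n ^ 2 + X ^ (j + 3) * qint i ^ 2 * qint (j + 1)) * hratio

theorem stmt_3 (n : ℕ) (hn : 0 < n) :
    ∑ k ∈ Finset.Icc 1 n,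
        qint (2 * k) * (qint k) ^ 2 * Polynomial.X ^ (2 * (n - k)) * qbinom (2 * n) (n + k)
      = (qint n) ^ 2 * qbinom (2 * n) n := by
  have h := tail_sum n (n - 1) 1 le_rfl (by omega)
  rw [h]
  simp [qint_zero]
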